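/- Let n > m ≥ 0, and for j, k ∈ {0, …, 2ⁿ − 1} define H(j,k) = (−1)^{b(j,k)}, where b(j,k) is the number of bit positions at which the binary expansions of j and k both have a 1. For each k, let v_k = (H(j,k))_{2^m ≤ j ≤ 2ⁿ−1} ∈ ℝ^{2ⁿ−2^m} be the k-th column with the first 2^m entries removed. Then for all k₁, k₂, ⟨v_{k₁}, v_{k₂}⟩ = 2ⁿ·δ_{k₁,k₂} − 2^m·[k₁ ≡ k₂ (mod 2^m)], where [·] is 1 if the condition holds and 0 otherwise. -/

import Mathlib

open scoped InnerProductSpace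

/-- `bitOverlap j k` is the number of bit positions at which the binary
expansions of `j` and `k` both have a `1`. -/
def bitOverlap (j k : ℕ) : ℕ := (Nat.land j k).bits.count true

lemma sgn_rec (x : ℕ) :
    (-1 : ℝ) ^ (x.bits.count true) = (-1) ^ (x % 2) * (-1) ^ ((x / 2).bits.count true) := by
  rcases Nat.eq_zero_or_pos x with rfl | hx
  · simp
  rcases Nat.mod_two_eq_zero_or_one x with h | h
  · have hx2 : x / 2 ≠ 0 := by omega
    have hxe : x = 2 * (x / 2) := by omega
    rw [h]
    nth_rewrite 1 [hxe]
    rw [Nat.bit0_bits _ hx2]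
    simp
  · have hxe : x = 2 * (x / 2) + 1 := by omega
    rw [h]
    nth_rewrite 1 [hxe]
    rw [Nat.bit1_bits]
    simp [pow_succ, List.count_cons, mul_comm]

lemma xor_div_two (a b : ℕ) : (a ^^^ b) / 2 = a / 2 ^^^ b / 2 := by
  apply Nat.eq_of_testBit_eq; intro i
  simp [Nat.testBit_div_two, Nat.testBit_xor]

lemma mod_two_pow_xor (a b m : ℕ) : (a ^^^ b) % 2 ^ m = a % 2 ^ m ^^^ b % 2 ^ m := by
  rw [← Nat.and_two_pow_sub_one_eq_mod, ← Nat.and_two_pow_sub_one_eq_mod,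
    ← Nat.and_two_pow_sub_one_eq_mod, Nat.and_xor_distrib_right]

lemma sgn_xor (a : ℕ) : ∀ b : ℕ,
    (-1 : ℝ) ^ ((a ^^^ b).bits.count true)
      = (-1) ^ (a.bits.count true) * (-1) ^ (b.bits.count true) := by
  induction a using Nat.strong_induction_on with
  | _ a ih =>
    intro b
    rcases Nat.eq_zero_or_pos a with rfl | ha
    · simp
    have hmod : (a ^^^ b) % 2 = a % 2 ^^^ b % 2 := by
      have := mod_two_pow_xor a b 1; simpa using this
    have hpm : (-1 : ℝ) ^ (a % 2 ^^^ b % 2) = (-1) ^ (a % 2) * (-1) ^ (b % 2) := by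
      rcases Nat.mod_two_eq_zero_or_one a with h | h <;>
        rcases Nat.mod_two_eq_zero_or_one b with h' | h' <;> rw [h, h'] <;> norm_num
    rw [sgn_rec (a ^^^ b), sgn_rec a, sgn_rec b, hmod, xor_div_two,
      ih (a / 2) (by omega) (b / 2), hpm]
    ring

lemma two_pow_bits_count (N : ℕ) : ((2 ^ N : ℕ)).bits.count true = 1 := by
  induction N with
  | zero => simp
  | succ N ih =>
    have h2 : (2 : ℕ) ^ (N + 1) = 2 * 2 ^ N := by ring
    rw [h2, Nat.bit0_bits _ (by positivity)]
    simpa using ih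

lemma two_pow_add_eq_xor (N j : ℕ) (h : j < 2 ^ N) : 2 ^ N + j = 2 ^ N ^^^ j := by
  apply Nat.eq_of_testBit_eq; intro i
  rcases lt_trichotomy i N with hi | rfl | hi
  · rw [Nat.testBit_two_pow_add_gt hi, Nat.testBit_xor, Nat.testBit_two_pow]
    simp [Nat.ne_of_gt hi]
  · rw [Nat.testBit_two_pow_add_eq, Nat.testBit_xor, Nat.testBit_two_pow,
      Nat.testBit_lt_two_pow h]
    simp
  · have h1 : 2 ^ N + j < 2 ^ i := by
      calc 2 ^ N + j < 2 ^ N + 2 ^ N := by omega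
      _ = 2 ^ (N + 1) := by ring
      _ ≤ 2 ^ i := Nat.pow_le_pow_right (by norm_num) (by omega)
    rw [Nat.testBit_lt_two_pow h1, Nat.testBit_xor, Nat.testBit_two_pow,
      Nat.testBit_lt_two_pow (lt_trans h (Nat.pow_lt_pow_right (by norm_num) hi))]
    simp [Nat.ne_of_lt hi]

lemma sum_sgn (c N : ℕ) :
    (∑ j ∈ Finset.range (2 ^ N), (-1 : ℝ) ^ ((j &&& c).bits.count true))
      = if c % 2 ^ N = 0 then (2 ^ N : ℝ) else 0 := by
  induction N with
  | zero => simp [Nat.mod_one]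
  | succ N ih =>
    have h2 : (2 : ℕ) ^ (N + 1) = 2 ^ N + 2 ^ N := by ring
    have hterm : ∀ j ∈ Finset.range (2 ^ N),
        (-1 : ℝ) ^ (((2 ^ N + j) &&& c).bits.count true)
          = (-1 : ℝ) ^ (((2 ^ N) &&& c).bits.count true)
            * (-1 : ℝ) ^ ((j &&& c).bits.count true) := by
      intro j hj
      rw [two_pow_add_eq_xor N j (Finset.mem_range.mp hj), Nat.and_xor_distrib_right,
        sgn_xor]
    rw [h2, Finset.sum_range_add, Finset.sum_congr rfl hterm, ← Finset.mul_sum, ih]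
    have hand : (2 : ℕ) ^ N &&& c = (c.testBit N).toNat * 2 ^ N := by
      rw [Nat.and_comm, Nat.and_two_pow]
    have hmm : c % (2 ^ N + 2 ^ N) = c % 2 ^ N + 2 ^ N * (c / 2 ^ N % 2) := by
      rw [show (2 : ℕ) ^ N + 2 ^ N = 2 ^ N * 2 by ring, Nat.mod_mul]
    have htb : c.testBit N = decide (c / 2 ^ N % 2 = 1) := Nat.testBit_eq_decide_div_mod_eq
    have hp : 0 < 2 ^ N := Nat.pow_pos (by norm_num)
    rcases hb : c.testBit N with _ | _
    · -- bit is false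
      have hdiv : c / 2 ^ N % 2 = 0 := by
        rw [hb] at htb
        rcases Nat.mod_two_eq_zero_or_one (c / 2 ^ N) with h | h
        · exact h
        · simp [h] at htb
      have hmod : c % (2 ^ N + 2 ^ N) = c % 2 ^ N := by
        rw [hmm, hdiv, Nat.mul_zero, Nat.add_zero]
      rw [hb] at hand
      simp only [Bool.toNat_false, Nat.zero_mul] at hand
      rw [hand, hmod]
      by_cases hc : c % 2 ^ N = 0
      · simp only [hc, if_pos, Nat.zero_bits, List.count_nil, pow_zero, one_mul, if_true]
        ring
      · simp [hc]
    · -- bit is true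
      have hdiv : c / 2 ^ N % 2 = 1 := by
        rw [hb] at htb
        exact of_decide_eq_true htb.symm
      have hmod : c % (2 ^ N + 2 ^ N) ≠ 0 := by
        rw [hmm, hdiv, Nat.mul_one]
        omega
      rw [hb] at hand
      simp only [Bool.toNat_true, Nat.one_mul] at hand
      rw [hand, two_pow_bits_count]
      by_cases hc : c % 2 ^ N = 0
      · simp only [hc, if_pos, hmod, if_neg, pow_one, if_true, if_false]
        ring
      · simp [hc, hmod]

/-- Inner products of the columns of the Sylvester matrix of order `2ⁿ` with
their first `2^m` entries removed:
`⟪v k₁, v k₂⟫ = 2ⁿ δ_{k₁ k₂} − 2^m [k₁ ≡ k₂ (mod 2^m)]`. -/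
theorem stmt_10 (n m : ℕ) (hmn : m < n)
    (v : Fin (2 ^ n) → EuclideanSpace ℝ (Fin (2 ^ n - 2 ^ m)))
    (hv : ∀ (k : Fin (2 ^ n)) (j : Fin (2 ^ n - 2 ^ m)),
      v k j = (-1 : ℝ) ^ bitOverlap (j.val + 2 ^ m) k.val) :
    ∀ k₁ k₂ : Fin (2 ^ n),
      ⟪v k₁, v k₂⟫_ℝ =
        (if k₁ = k₂ then (2 ^ n : ℝ) else 0) -
          (if k₁.val % 2 ^ m = k₂.val % 2 ^ m then (2 ^ m : ℝ) else 0) := by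
  intro k₁ k₂
  set c : ℕ := k₁.val ^^^ k₂.val with hc
  have key : ∀ j : ℕ,
      (-1 : ℝ) ^ (bitOverlap j k₁.val) * (-1 : ℝ) ^ (bitOverlap j k₂.val)
        = (-1 : ℝ) ^ ((j &&& c).bits.count true) := by
    intro j
    show _ = (-1 : ℝ) ^ ((j &&& (k₁.val ^^^ k₂.val)).bits.count true)
    rw [Nat.and_xor_distrib_left, sgn_xor]
    rfl
  have hinner : ⟪v k₁, v k₂⟫_ℝ
      = ∑ j ∈ Finset.range (2 ^ n - 2 ^ m),
          (-1 : ℝ) ^ (((j + 2 ^ m) &&& c).bits.count true) := by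
    rw [PiLp.inner_apply]
    rw [← Fin.sum_univ_eq_sum_range
      (fun j => (-1 : ℝ) ^ (((j + 2 ^ m) &&& c).bits.count true))]
    refine Finset.sum_congr rfl fun j _ => ?_
    rw [hv, hv]
    simp only [RCLike.inner_apply, starRingEnd_apply, star_trivial]
    rw [mul_comm]; exact key (j.val + 2 ^ m)
  have hle : (2 : ℕ) ^ m ≤ 2 ^ n := Nat.pow_le_pow_right (by norm_num) (le_of_lt hmn)
  have hnm : 2 ^ m + (2 ^ n - 2 ^ m) = 2 ^ n := by omega
  have hsplit : (∑ j ∈ Finset.range (2 ^ m), (-1 : ℝ) ^ ((j &&& c).bits.count true))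
      + ∑ j ∈ Finset.range (2 ^ n - 2 ^ m),
          (-1 : ℝ) ^ (((2 ^ m + j) &&& c).bits.count true)
      = ∑ j ∈ Finset.range (2 ^ n), (-1 : ℝ) ^ ((j &&& c).bits.count true) := by
    conv_rhs => rw [← hnm]
    rw [Finset.sum_range_add (fun j => (-1 : ℝ) ^ ((j &&& c).bits.count true))]
  have hinner2 : ⟪v k₁, v k₂⟫_ℝ
      = (∑ j ∈ Finset.range (2 ^ n), (-1 : ℝ) ^ ((j &&& c).bits.count true))
        - ∑ j ∈ Finset.range (2 ^ m), (-1 : ℝ) ^ ((j &&& c).bits.count true) := by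
    rw [← hsplit, hinner]
    have : ∀ j, j + 2 ^ m = 2 ^ m + j := fun j => Nat.add_comm _ _
    simp only [this]
    ring
  rw [hinner2, sum_sgn, sum_sgn]
  have hclt : c < 2 ^ n := Nat.xor_lt_two_pow k₁.isLt k₂.isLt
  have h1 : (c % 2 ^ n = 0) ↔ (k₁ = k₂) := by
    rw [Nat.mod_eq_of_lt hclt, hc, Nat.xor_eq_zero_iff, Fin.val_eq_val]
  have h2 : (c % 2 ^ m = 0) ↔ (k₁.val % 2 ^ m = k₂.val % 2 ^ m) := by
    rw [hc, mod_two_pow_xor, Nat.xor_eq_zero_iff]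
  congr 1
  · simp only [h1]
  · simp only [h2]
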